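/- Let f_1, …, f_P : ℝ^n → ℝ be continuously differentiable and suppose there is L > 0 such that each gradient ∇f_p is L-Lipschitz continuous; set f = ∑_{p=1}^P f_p. Let γ ∈ (0,1), δ ∈ (0,1) and τ > 0. Let {w^k} ⊂ ℝ^n be a bounded sequence and {ζ^k} ⊂ (0,∞) with ζ^k → 0. For each k let (h_1^k, …, h_P^k) be a permutation of {1, …, P}, define w̃_0^k = w^k, w̃_i^k = w̃_{i−1}^k − ζ^k ∇f_{h_i^k}(w̃_{i−1}^k) for i = 1, …, P, and d^k = −∑_{i=1}^P ∇f_{h_i^k}(w̃_{i−1}^k). Suppose there is an infinite set K ⊆ ℕ such that for every k ∈ K at least one of the following holds: (i) ‖d^k‖ ≤ τ ζ^k; (ii) f(w^k + ζ^k d^k) > f(w^k) − γ (ζ^k)² ‖d^k‖²; (iii) there is α^k > 0 with (α^k)² ‖d^k‖² ≤ τ ζ^k and f(w^k + (α^k/δ) d^k) > f(w^k) − γ (α^k/δ)² ‖d^k‖². Then {w^k} admits limit points and at least one limit point w̄ of {w^k} satisfies ∇f(w̄) = 0. -/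

import Mathlib

open Filter Finset

lemma stmt17_descent {E : Type*} [NormedAddCommGroup E] [InnerProductSpace ℝ E]
    [CompleteSpace E]
    (F : E → ℝ) (G : E → E) (hGrad : ∀ x, HasGradientAt F (G x) x)
    (Λ : ℝ) (hΛ : 0 ≤ Λ) (hGlip : ∀ u v, ‖G u - G v‖ ≤ Λ * ‖u - v‖) (x v : E) :
    F (x + v) ≤ F x + inner ℝ (G x) v + Λ * ‖v‖ ^ 2 := by
  have hder : ∀ s : ℝ, HasDerivAt (fun t : ℝ => F (x + t • v))
      (inner ℝ (G (x + s • v)) v : ℝ) s := by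
    intro s
    have h1 : HasDerivAt (fun t : ℝ => x + t • v) v s := by
      simpa using ((hasDerivAt_id s).smul_const v).const_add x
    have := (hGrad (x + s • v)).hasFDerivAt.comp_hasDerivAt s h1
    simpa [Function.comp_def, InnerProductSpace.toDual_apply_apply] using this
  obtain ⟨c, hc, heq⟩ := exists_hasDerivAt_eq_slope (fun t : ℝ => F (x + t • v))
    (fun s => (inner ℝ (G (x + s • v)) v : ℝ)) one_pos
    (fun s _ => ((hder s).continuousAt).continuousWithinAt) (fun s _ => hder s)
  have hval : F (x + v) - F x = inner ℝ (G (x + c • v)) v := by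
    rw [heq]; simp
  have hsplit : (inner ℝ (G (x + c • v)) v : ℝ)
      = inner ℝ (G x) v + inner ℝ (G (x + c • v) - G x) v := by
    rw [inner_sub_left]; ring
  have hb : (inner ℝ (G (x + c • v) - G x) v : ℝ) ≤ Λ * ‖v‖ ^ 2 := by
    calc (inner ℝ (G (x + c • v) - G x) v : ℝ) ≤ ‖G (x + c • v) - G x‖ * ‖v‖ :=
          real_inner_le_norm _ _
      _ ≤ (Λ * ‖x + c • v - x‖) * ‖v‖ := by
          apply mul_le_mul_of_nonneg_right (hGlip _ _) (norm_nonneg _)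
      _ ≤ Λ * ‖v‖ ^ 2 := by
          have : ‖x + c • v - x‖ = |c| * ‖v‖ := by simp [norm_smul]
          rw [this, abs_of_pos hc.1]
          nlinarith [mul_nonneg hΛ (mul_nonneg (norm_nonneg v) (norm_nonneg v)), hc.1.le, hc.2.le]
  linarith [hval, hsplit.le, hsplit.ge, hb]

set_option maxHeartbeats 1000000 in
theorem stmt_17 {n P : ℕ}
    (f : Fin P → EuclideanSpace ℝ (Fin n) → ℝ)
    (hf : ∀ p, ContDiff ℝ 1 (f p))
    (L : ℝ) (hL : 0 < L)
    (hlip : ∀ p (u v : EuclideanSpace ℝ (Fin n)),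
      ‖gradient (f p) u - gradient (f p) v‖ ≤ L * ‖u - v‖)
    (γ : ℝ) (hγ : γ ∈ Set.Ioo (0 : ℝ) 1)
    (δ : ℝ) (hδ : δ ∈ Set.Ioo (0 : ℝ) 1)
    (τ : ℝ) (hτ : 0 < τ)
    (w : ℕ → EuclideanSpace ℝ (Fin n)) (hwbdd : ∃ C, ∀ k, ‖w k‖ ≤ C)
    (ζ : ℕ → ℝ) (hζpos : ∀ k, 0 < ζ k)
    (hζto0 : Tendsto ζ atTop (nhds 0))
    (h : ℕ → ℕ → Fin P)
    (hperm : ∀ k, Function.Bijective (fun i : Fin P => h k i.val))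
    (wt : ℕ → ℕ → EuclideanSpace ℝ (Fin n))
    (hinit : ∀ k, wt k 0 = w k)
    (hiter : ∀ k, ∀ i, i < P →
      wt k (i + 1) = wt k i - ζ k • gradient (f (h k i)) (wt k i))
    (d : ℕ → EuclideanSpace ℝ (Fin n))
    (hd : ∀ k, d k = -∑ i ∈ Finset.range P, gradient (f (h k i)) (wt k i))
    (F : EuclideanSpace ℝ (Fin n) → ℝ) (hF : F = fun x => ∑ p : Fin P, f p x)
    (K : Set ℕ) (hKinf : K.Infinite)
    (hK : ∀ k ∈ K,
      ‖d k‖ ≤ τ * ζ k ∨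
      F (w k + ζ k • d k) > F (w k) - γ * ζ k ^ 2 * ‖d k‖ ^ 2 ∨
      (∃ α : ℝ, 0 < α ∧ α ^ 2 * ‖d k‖ ^ 2 ≤ τ * ζ k ∧
        F (w k + (α / δ) • d k) > F (w k) - γ * (α / δ) ^ 2 * ‖d k‖ ^ 2)) :
    ∃ wbar : EuclideanSpace ℝ (Fin n),
      (∃ φ : ℕ → ℕ, StrictMono φ ∧
        Tendsto (fun k => w (φ k)) atTop (nhds wbar)) ∧
      gradient F wbar = 0 := by
  obtain ⟨C0, hC0⟩ := hwbdd
  obtain ⟨C, hCdef⟩ : ∃ C : ℝ, C = max C0 0 := ⟨_, rfl⟩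
  have hC : ∀ k, ‖w k‖ ≤ C := fun k => hCdef ▸ le_trans (hC0 k) (le_max_left _ _)
  have hCnn : (0:ℝ) ≤ C := hCdef ▸ le_max_right _ _
  obtain ⟨G, hGdef⟩ : ∃ G : EuclideanSpace ℝ (Fin n) → EuclideanSpace ℝ (Fin n), G = fun x => ∑ p : Fin P, gradient (f p) x := ⟨_, rfl⟩
  have hdiff : ∀ p, Differentiable ℝ (f p) := fun p => (hf p).differentiable one_ne_zero
  have hGrad : ∀ x, HasGradientAt F (G x) x := by
    intro x
    rw [hF, hGdef]
    rw [hasGradientAt_iff_hasFDerivAt, map_sum]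
    exact HasFDerivAt.fun_sum fun p _ => ((hdiff p x).hasGradientAt).hasFDerivAt
  have hgradF : ∀ x, gradient F x = G x := fun x => (hGrad x).gradient
  obtain ⟨Λ, hΛdef⟩ : ∃ Λ : ℝ, Λ = (P : ℝ) * L := ⟨_, rfl⟩
  have hΛnn : (0:ℝ) ≤ Λ := hΛdef ▸ mul_nonneg (Nat.cast_nonneg _) hL.le
  have hGlip : ∀ u v, ‖G u - G v‖ ≤ Λ * ‖u - v‖ := by
    intro u v
    have : G u - G v = ∑ p : Fin P, (gradient (f p) u - gradient (f p) v) := by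
      rw [hGdef]; rw [Finset.sum_sub_distrib]
    rw [this, hΛdef]
    calc ‖∑ p : Fin P, (gradient (f p) u - gradient (f p) v)‖
        ≤ ∑ p : Fin P, ‖gradient (f p) u - gradient (f p) v‖ := norm_sum_le _ _
      _ ≤ ∑ _p : Fin P, L * ‖u - v‖ := Finset.sum_le_sum fun p _ => hlip p u v
      _ = (P : ℝ) * L * ‖u - v‖ := by simp [mul_assoc]
  -- gradient bound at any point
  obtain ⟨A, hAdef⟩ : ∃ A : ℝ, A = ∑ p : Fin P, ‖gradient (f p) 0‖ := ⟨_, rfl⟩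
  have hAnn : (0:ℝ) ≤ A := hAdef ▸ Finset.sum_nonneg fun p _ => norm_nonneg _
  have hgb : ∀ p (x : EuclideanSpace ℝ (Fin n)), ‖gradient (f p) x‖ ≤ A + L * ‖x‖ := by
    intro p x
    have h1 : ‖gradient (f p) x‖ ≤ ‖gradient (f p) x - gradient (f p) 0‖
        + ‖gradient (f p) 0‖ := by
      simpa using norm_add_le (gradient (f p) x - gradient (f p) 0) (gradient (f p) 0)
    have h2 : ‖gradient (f p) x - gradient (f p) 0‖ ≤ L * ‖x‖ := by
      simpa using hlip p x 0
    have h3 : ‖gradient (f p) 0‖ ≤ A := by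
      rw [hAdef]
      exact Finset.single_le_sum (f := fun q : Fin P => ‖gradient (f q) 0‖) (fun q _ => norm_nonneg _) (Finset.mem_univ p)
    linarith
  -- trajectory bound
  obtain ⟨M, hMdef⟩ : ∃ M : ℝ, M = (1 + L) ^ P * (C + A * P) := ⟨_, rfl⟩
  have hMnn : (0:ℝ) ≤ M := by rw [hMdef]; positivity
  have hwtb : ∀ k, ζ k ≤ 1 → ∀ i ≤ P, ‖wt k i‖ ≤ M := by
    intro k hζ1 i hiP
    have key : ∀ j ≤ P, ‖wt k j‖ ≤ (1 + L) ^ j * (C + A * j) := by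
      intro j
      induction j with
      | zero => intro _; simpa [hinit k] using hC k
      | succ i ih =>
        intro hip
        have hi : i < P := Nat.lt_of_succ_le hip
        have hih := ih hi.le
        have hwtnn : (0:ℝ) ≤ ‖wt k i‖ := norm_nonneg _
        have hpow1 : (1:ℝ) ≤ (1 + L) ^ (i + 1) := one_le_pow₀ (by linarith)
        have hpow0 : (0:ℝ) < (1 + L) ^ i := by positivity
        have hstep : ‖wt k (i + 1)‖ ≤ ‖wt k i‖ + ζ k * (A + L * ‖wt k i‖) := by
          rw [hiter k i hi]
          calc ‖wt k i - ζ k • gradient (f (h k i)) (wt k i)‖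
              ≤ ‖wt k i‖ + ‖ζ k • gradient (f (h k i)) (wt k i)‖ := norm_sub_le _ _
            _ ≤ ‖wt k i‖ + ζ k * (A + L * ‖wt k i‖) := by
                rw [norm_smul, Real.norm_eq_abs, abs_of_pos (hζpos k)]
                exact add_le_add_right
                  (mul_le_mul_of_nonneg_left (hgb _ _) (hζpos k).le) _
        have : ‖wt k (i + 1)‖ ≤ (1 + L) * ‖wt k i‖ + A := by
          have hgnn : (0:ℝ) ≤ A + L * ‖wt k i‖ := by positivity
          nlinarith [(hζpos k).le]
        calc ‖wt k (i + 1)‖ ≤ (1 + L) * ((1 + L) ^ i * (C + A * i)) + A := by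
              nlinarith [hih, hL.le]
          _ ≤ (1 + L) ^ (i + 1) * (C + A * ((i:ℝ) + 1)) := by
              have hpow1' : (1:ℝ) ≤ (1 + L) ^ i * (1 + L) := by
                rw [← pow_succ]; exact hpow1
              rw [pow_succ]
              nlinarith [mul_le_mul_of_nonneg_right hpow1' hAnn]
          _ = (1 + L) ^ (i + 1) * (C + A * ((i + 1 : ℕ) : ℝ)) := by push_cast; ring
    calc ‖wt k i‖ ≤ (1 + L) ^ i * (C + A * i) := key i hiP
      _ ≤ M := by
        rw [hMdef]
        apply mul_le_mul
        · exact pow_le_pow_right₀ (by linarith) hiP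
        · have : (i:ℝ) ≤ P := Nat.cast_le.mpr hiP
          nlinarith
        · positivity
        · positivity
  obtain ⟨G₁, hG₁def⟩ : ∃ g : ℝ, g = A + L * M := ⟨_, rfl⟩
  have hG₁nn : (0:ℝ) ≤ G₁ := by rw [hG₁def]; positivity
  have hgtraj : ∀ k, ζ k ≤ 1 → ∀ i < P, ‖gradient (f (h k i)) (wt k i)‖ ≤ G₁ := by
    intro k hζ1 i hi
    calc ‖gradient (f (h k i)) (wt k i)‖ ≤ A + L * ‖wt k i‖ := hgb _ _
      _ ≤ G₁ := by rw [hG₁def]; nlinarith [hwtb k hζ1 i hi.le]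
  have hdisp : ∀ k, ζ k ≤ 1 → ∀ i ≤ P, ‖wt k i - w k‖ ≤ ζ k * ((i:ℝ) * G₁) := by
    intro k hζ1 i
    induction i with
    | zero => intro _; simp [hinit k]
    | succ i ih =>
      intro hip
      have hi : i < P := Nat.lt_of_succ_le hip
      have hih := ih hi.le
      rw [hiter k i hi]
      have hre : wt k i - ζ k • gradient (f (h k i)) (wt k i) - w k
          = (wt k i - w k) - ζ k • gradient (f (h k i)) (wt k i) := by abel
      rw [hre]
      calc ‖(wt k i - w k) - ζ k • gradient (f (h k i)) (wt k i)‖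
          ≤ ‖wt k i - w k‖ + ‖ζ k • gradient (f (h k i)) (wt k i)‖ := norm_sub_le _ _
        _ ≤ ζ k * ((i:ℝ) * G₁) + ζ k * G₁ := by
            rw [norm_smul, Real.norm_eq_abs, abs_of_pos (hζpos k)]
            exact add_le_add hih
              (mul_le_mul_of_nonneg_left (hgtraj k hζ1 i hi) (hζpos k).le)
        _ = ζ k * (((i+1 : ℕ) : ℝ) * G₁) := by push_cast; ring
  have hGsum : ∀ k, G (w k) = ∑ i ∈ Finset.range P, gradient (f (h k i)) (w k) := by
    intro k
    rw [hGdef]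
    rw [← Fin.sum_univ_eq_sum_range (fun i => gradient (f (h k i)) (w k))]
    exact (Fintype.sum_bijective _ (hperm k) _ _ (fun i => rfl)).symm
  obtain ⟨C₂, hC₂def⟩ : ∃ c : ℝ, c = (P:ℝ) * (L * ((P:ℝ) * G₁)) := ⟨_, rfl⟩
  have hC₂nn : (0:ℝ) ≤ C₂ := by rw [hC₂def]; positivity
  have herr : ∀ k, ζ k ≤ 1 → ‖d k + G (w k)‖ ≤ C₂ * ζ k := by
    intro k hζ1
    have hsplit : d k + G (w k) = ∑ i ∈ Finset.range P,
        (gradient (f (h k i)) (w k) - gradient (f (h k i)) (wt k i)) := by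
      rw [hd k, hGsum k, Finset.sum_sub_distrib]; abel
    rw [hsplit]
    calc ‖∑ i ∈ Finset.range P,
          (gradient (f (h k i)) (w k) - gradient (f (h k i)) (wt k i))‖
        ≤ ∑ i ∈ Finset.range P,
          ‖gradient (f (h k i)) (w k) - gradient (f (h k i)) (wt k i)‖ := norm_sum_le _ _
      _ ≤ ∑ _i ∈ Finset.range P, L * (ζ k * ((P:ℝ) * G₁)) := by
          apply Finset.sum_le_sum
          intro i hi
          rw [Finset.mem_range] at hi
          calc ‖gradient (f (h k i)) (w k) - gradient (f (h k i)) (wt k i)‖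
              = ‖gradient (f (h k i)) (wt k i) - gradient (f (h k i)) (w k)‖ :=
                norm_sub_rev _ _
            _ ≤ L * ‖wt k i - w k‖ := hlip _ _ _
            _ ≤ L * (ζ k * ((P:ℝ) * G₁)) := by
                have h1 := hdisp k hζ1 i hi.le
                have h2 : (i:ℝ) * G₁ ≤ (P:ℝ) * G₁ :=
                  mul_le_mul_of_nonneg_right (Nat.cast_le.mpr hi.le) hG₁nn
                nlinarith [mul_le_mul_of_nonneg_left h1 hL.le,
                  mul_le_mul_of_nonneg_left h2 (mul_nonneg hL.le (hζpos k).le)]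
      _ = C₂ * ζ k := by
          rw [Finset.sum_const, Finset.card_range, nsmul_eq_mul, hC₂def]; ring
  have hinner : ∀ k, ζ k ≤ 1 →
      (inner ℝ (G (w k)) (d k) : ℝ) ≤ C₂ * ζ k * ‖d k‖ - ‖d k‖ ^ 2 := by
    intro k hζ1
    have hsp : (inner ℝ (G (w k)) (d k) : ℝ)
        = inner ℝ (d k + G (w k)) (d k) - inner ℝ (d k) (d k) := by
      rw [inner_add_left]; ring
    rw [hsp, real_inner_self_eq_norm_sq]
    have h1 : (inner ℝ (d k + G (w k)) (d k) : ℝ) ≤ C₂ * ζ k * ‖d k‖ := by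
      calc (inner ℝ (d k + G (w k)) (d k) : ℝ) ≤ ‖d k + G (w k)‖ * ‖d k‖ :=
            real_inner_le_norm _ _
        _ ≤ C₂ * ζ k * ‖d k‖ :=
            mul_le_mul_of_nonneg_right (herr k hζ1) (norm_nonneg _)
    linarith
  have hkey : ∀ (x v : EuclideanSpace ℝ (Fin n)),
      F (x + v) ≤ F x + inner ℝ (G x) v + Λ * ‖v‖ ^ 2 :=
    stmt17_descent F G hGrad Λ hΛnn hGlip
  obtain ⟨ε, hεdef⟩ : ∃ e : ℝ, e = min 1 (1/(2*(Λ+1))) := ⟨_, rfl⟩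
  have hεpos : 0 < ε := by rw [hεdef]; positivity
  have hmain : ∀ k ∈ K, ζ k ≤ ε →
      ‖d k‖ ≤ τ * ζ k + 2 * C₂ * ζ k + (Λ + 1) * Real.sqrt (τ * ζ k) / δ := by
    intro k hkK hζε
    have hζ1 : ζ k ≤ 1 := le_trans hζε (by rw [hεdef]; exact min_le_left _ _)
    have h2' : ζ k ≤ 1/(2*(Λ+1)) := le_trans hζε (by rw [hεdef]; exact min_le_right _ _)
    have hζΛ : (Λ + 1) * ζ k ≤ 1/2 := by
      rw [le_div_iff₀ (by positivity)] at h2'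
      linarith
    have hsqrtnn : (0:ℝ) ≤ Real.sqrt (τ * ζ k) := Real.sqrt_nonneg _
    have hDnn : (0:ℝ) ≤ ‖d k‖ := norm_nonneg _
    have htrm1 : (0:ℝ) ≤ τ * ζ k := mul_nonneg hτ.le (hζpos k).le
    have htrm2 : (0:ℝ) ≤ 2 * C₂ * ζ k := mul_nonneg (mul_nonneg (by norm_num) hC₂nn) (hζpos k).le
    have htrm3 : (0:ℝ) ≤ (Λ + 1) * Real.sqrt (τ * ζ k) / δ :=
      div_nonneg (mul_nonneg (by linarith) hsqrtnn) hδ.1.le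
    have hI := hinner k hζ1
    rcases hK k hkK with hcase | hcase | ⟨α, hα, hαd, hcase⟩
    · linarith
    · have hk2 := hkey (w k) (ζ k • d k)
      rw [real_inner_smul_right] at hk2
      have hnsm : ‖ζ k • d k‖ = ζ k * ‖d k‖ := by
        rw [norm_smul, Real.norm_eq_abs, abs_of_pos (hζpos k)]
      rw [hnsm] at hk2
      have h3 : ζ k * ‖d k‖ ^ 2
          ≤ ζ k * (C₂ * ζ k * ‖d k‖ + (Λ + γ) * (ζ k * ‖d k‖ ^ 2)) := by
        linarith [mul_le_mul_of_nonneg_left hI (hζpos k).le]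
      have h4 : ‖d k‖ ^ 2 ≤ C₂ * ζ k * ‖d k‖ + (Λ + γ) * (ζ k * ‖d k‖ ^ 2) :=
        (mul_le_mul_iff_right₀ (hζpos k)).mp h3
      have h5 : (Λ + γ) * ζ k ≤ 1/2 := by
        linarith [mul_nonneg (sub_nonneg.mpr hγ.2.le) (hζpos k).le]
      have h6 : ‖d k‖ ^ 2 ≤ 2 * C₂ * ζ k * ‖d k‖ := by
        linarith [h4, mul_le_mul_of_nonneg_right h5 (sq_nonneg ‖d k‖)]
      rcases hDnn.eq_or_lt with hD0 | hDpos
      · rw [← hD0]; linarith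
      · have : ‖d k‖ ≤ 2 * C₂ * ζ k := by
          have := le_of_mul_le_mul_right (by linarith [h6] : ‖d k‖ * ‖d k‖ ≤ (2 * C₂ * ζ k) * ‖d k‖) hDpos
          linarith
        linarith
    · have hβ : 0 < α / δ := div_pos hα hδ.1
      have hk2 := hkey (w k) ((α / δ) • d k)
      rw [real_inner_smul_right] at hk2
      have hnsm : ‖(α / δ) • d k‖ = (α / δ) * ‖d k‖ := by
        rw [norm_smul, Real.norm_eq_abs, abs_of_pos hβ]
      rw [hnsm] at hk2
      have h3 : (α / δ) * ‖d k‖ ^ 2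
          ≤ (α / δ) * (C₂ * ζ k * ‖d k‖ + (Λ + γ) * ((α / δ) * ‖d k‖ ^ 2)) := by
        linarith [mul_le_mul_of_nonneg_left hI hβ.le]
      have h4 : ‖d k‖ ^ 2 ≤ C₂ * ζ k * ‖d k‖ + (Λ + γ) * ((α / δ) * ‖d k‖ ^ 2) :=
        (mul_le_mul_iff_right₀ hβ).mp h3
      have hαD : α * ‖d k‖ ≤ Real.sqrt (τ * ζ k) := by
        have hsq : (α * ‖d k‖) ^ 2 ≤ τ * ζ k := by linarith [hαd, sq_nonneg (α * ‖d k‖)]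
        calc α * ‖d k‖ = Real.sqrt ((α * ‖d k‖) ^ 2) :=
              (Real.sqrt_sq (by positivity)).symm
          _ ≤ Real.sqrt (τ * ζ k) := Real.sqrt_le_sqrt hsq
      have h5 : (α / δ) * ‖d k‖ ≤ Real.sqrt (τ * ζ k) / δ := by
        rw [div_mul_eq_mul_div]
        exact (div_le_div_iff_of_pos_right hδ.1).mpr hαD
      have hΛγnn : (0:ℝ) ≤ Λ + γ := by linarith [hγ.1.le]
      have h6 : ‖d k‖ ^ 2 ≤ C₂ * ζ k * ‖d k‖
          + (Λ + 1) * (Real.sqrt (τ * ζ k) / δ) * ‖d k‖ := by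
        have hh := mul_le_mul_of_nonneg_right h5 hDnn
        linarith [h4, mul_le_mul_of_nonneg_left hh hΛγnn,
          mul_nonneg (sub_nonneg.mpr hγ.2.le)
            (mul_nonneg (div_nonneg hsqrtnn hδ.1.le) hDnn)]
      rcases hDnn.eq_or_lt with hD0 | hDpos
      · rw [← hD0]; linarith
      · have h7 : ‖d k‖ ≤ C₂ * ζ k + (Λ + 1) * (Real.sqrt (τ * ζ k) / δ) := by
          have := le_of_mul_le_mul_right
            (by linarith [h6] : ‖d k‖ * ‖d k‖
              ≤ (C₂ * ζ k + (Λ + 1) * (Real.sqrt (τ * ζ k) / δ)) * ‖d k‖) hDpos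
          linarith
        have : (Λ + 1) * (Real.sqrt (τ * ζ k) / δ)
            = (Λ + 1) * Real.sqrt (τ * ζ k) / δ := by ring
        rw [this] at h7
        linarith [h7, htrm1, mul_nonneg hC₂nn (hζpos k).le]
  obtain ⟨ψ, hψmono, hψK⟩ : ∃ ψ : ℕ → ℕ, StrictMono ψ ∧ ∀ j, ψ j ∈ K :=
    ⟨Nat.nth (· ∈ K), Nat.nth_strictMono hKinf, fun j => Nat.nth_mem_of_infinite hKinf j⟩
  obtain ⟨wbar, -, φ, hφmono, hφconv⟩ :=
    (isCompact_closedBall (0 : EuclideanSpace ℝ (Fin n)) C).tendsto_subseq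
      (x := fun j => w (ψ j))
      (fun j => by simpa [Metric.mem_closedBall, dist_eq_norm] using hC (ψ j))
  obtain ⟨χ, hχdef⟩ : ∃ χ : ℕ → ℕ, χ = fun j => ψ (φ j) := ⟨_, rfl⟩
  have hχmono : StrictMono χ := hχdef ▸ hψmono.comp hφmono
  have hχK : ∀ j, χ j ∈ K := fun j => hχdef ▸ hψK _
  have hwconv : Tendsto (fun j => w (χ j)) atTop (nhds wbar) := hχdef ▸ hφconv
  have hζχ : Tendsto (fun j => ζ (χ j)) atTop (nhds 0) :=
    hζto0.comp hχmono.tendsto_atTop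
  have hbnd : Tendsto (fun j => (τ * ζ (χ j) + 2 * C₂ * ζ (χ j)
      + (Λ + 1) * Real.sqrt (τ * ζ (χ j)) / δ) + C₂ * ζ (χ j)) atTop (nhds 0) := by
    have hcont : Continuous fun z : ℝ =>
        (τ * z + 2 * C₂ * z + (Λ + 1) * Real.sqrt (τ * z) / δ) + C₂ * z := by
      fun_prop
    have hcomp := (hcont.tendsto 0).comp hζχ
    simpa [Function.comp_def] using hcomp
  have hGto0 : Tendsto (fun j => G (w (χ j))) atTop (nhds 0) := by
    apply squeeze_zero_norm' _ hbnd
    have hev : ∀ᶠ j in atTop, ζ (χ j) ≤ ε := hζχ.eventually (eventually_le_nhds hεpos)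
    filter_upwards [hev] with j hj
    have h1 := hmain (χ j) (hχK j) hj
    have h2 := herr (χ j) (le_trans hj (by rw [hεdef]; exact min_le_left _ _))
    calc ‖G (w (χ j))‖ ≤ ‖d (χ j)‖ + ‖d (χ j) + G (w (χ j))‖ := by
          have h3 := norm_sub_le (d (χ j) + G (w (χ j))) (d (χ j))
          rw [add_sub_cancel_left] at h3
          linarith
      _ ≤ _ := add_le_add h1 h2
  have hGcont : Continuous G := by
    have hlw : LipschitzWith (Real.toNNReal Λ) G := by
      apply LipschitzWith.of_dist_le_mul
      intro u v
      rw [dist_eq_norm, dist_eq_norm]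
      calc ‖G u - G v‖ ≤ Λ * ‖u - v‖ := hGlip u v
        _ ≤ Real.toNNReal Λ * ‖u - v‖ :=
            mul_le_mul_of_nonneg_right (Real.le_coe_toNNReal Λ) (norm_nonneg _)
    exact hlw.continuous
  have hGlim : Tendsto (fun j => G (w (χ j))) atTop (nhds (G wbar)) :=
    (hGcont.tendsto wbar).comp hwconv
  have hGbar : G wbar = 0 := tendsto_nhds_unique hGlim hGto0
  exact ⟨wbar, ⟨χ, hχmono, hwconv⟩, by rw [hgradF]; exact hGbar⟩
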